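/- Let f : 𝔉_Γ → ℝ_{≥0} be a right-invariant subadditive function on the finite nonempty subsets of a countably infinite amenable group Γ, i.e., f(Fg) = f(F) and f(E ∪ F) ≤ f(E) + f(F) for all E, F ∈ 𝔉_Γ, g ∈ Γ. Then for any Følner sequence (F_n) of Γ, the limit lim_{n→∞} f(F_n)/|F_n| exists, and its value is independent of the choice of Følner sequence. -/

import Mathlib

open Filter

/-- A Følner sequence: a sequence of nonempty finite subsets `F n` of the group such that
`|F n Δ g F n| / |F n| → 0` for every `g`. -/
def IsFolner {Γ : Type*} [Group Γ] [DecidableEq Γ] (F : ℕ → Finset Γ) : Prop :=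
  (∀ n, (F n).Nonempty) ∧
    ∀ g : Γ, Tendsto
      (fun n => ((symmDiff (F n) ((F n).image (fun x => g * x))).card : ℝ) / (F n).card)
      atTop (nhds 0)

namespace OW

variable {Γ : Type*} [Group Γ] [DecidableEq Γ]

def tileR (E : Finset Γ) (c : Γ) : Finset Γ := E.image (fun x => x * c)

def lmul (g : Γ) (T : Finset Γ) : Finset Γ := T.image (fun x => g * x)

def Dint (E F : Finset Γ) : Finset Γ := F.filter (fun c => ∀ e ∈ E, e * c ∈ F)

def unionF (l : List (Finset Γ)) : Finset Γ := l.foldr (· ∪ ·) ∅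

lemma tileR_card (E : Finset Γ) (c : Γ) : (tileR E c).card = E.card :=
  Finset.card_image_of_injective _ (mul_left_injective c)

lemma mem_tileR {E : Finset Γ} {c x : Γ} : x ∈ tileR E c ↔ x * c⁻¹ ∈ E := by
  simp only [tileR, Finset.mem_image]
  constructor
  · rintro ⟨a, ha, rfl⟩; simpa using ha
  · intro h; exact ⟨x * c⁻¹, h, by group⟩

lemma tileR_subset_iff {E F : Finset Γ} {c : Γ} : tileR E c ⊆ F ↔ ∀ e ∈ E, e * c ∈ F := by
  rw [tileR, Finset.image_subset_iff]

lemma tileR_nonempty {E : Finset Γ} (hE : E.Nonempty) (c : Γ) : (tileR E c).Nonempty :=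
  hE.image _

lemma lmul_tileR (g : Γ) (E : Finset Γ) (c : Γ) : lmul g (tileR E c) = tileR (lmul g E) c := by
  simp only [lmul, tileR, Finset.image_image]
  congr 1; ext x; simp [mul_assoc]

lemma tileR_sdiff (A B : Finset Γ) (c : Γ) : tileR A c \ tileR B c = tileR (A \ B) c :=
  (Finset.image_sdiff A B (mul_left_injective c)).symm

lemma mem_Dint {E F : Finset Γ} {c : Γ} : c ∈ Dint E F ↔ c ∈ F ∧ ∀ e ∈ E, e * c ∈ F := by
  simp [Dint]

lemma Dint_subset (E F : Finset Γ) : Dint E F ⊆ F := Finset.filter_subset _ _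

lemma tileR_subset_of_mem_Dint {E F : Finset Γ} {c : Γ} (h : c ∈ Dint E F) : tileR E c ⊆ F :=
  tileR_subset_iff.2 (mem_Dint.1 h).2

lemma unionF_cons2 (A : Finset Γ) (l : List (Finset Γ)) :
    unionF (A :: l) = A ∪ unionF l := rfl

lemma mem_unionF {l : List (Finset Γ)} {x : Γ} : x ∈ unionF l ↔ ∃ A ∈ l, x ∈ A := by
  induction l with
  | nil => simp [unionF]
  | cons A t ih =>
    rw [unionF_cons2, Finset.mem_union] at *
    simp [ih]

lemma subset_unionF {l : List (Finset Γ)} {A : Finset Γ} (h : A ∈ l) : A ⊆ unionF l :=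
  fun x hx => mem_unionF.2 ⟨A, h, hx⟩

lemma unionF_subset {l : List (Finset Γ)} {S : Finset Γ} (h : ∀ A ∈ l, A ⊆ S) :
    unionF l ⊆ S := fun x hx => by
  obtain ⟨A, hA, hxA⟩ := mem_unionF.1 hx
  exact h A hA hxA

lemma unionF_append (l₁ l₂ : List (Finset Γ)) :
    unionF (l₁ ++ l₂) = unionF l₁ ∪ unionF l₂ := by
  induction l₁ with
  | nil => simp [unionF]
  | cons A t ih =>
    rw [List.cons_append, unionF_cons2, unionF_cons2, ih, Finset.union_assoc]

lemma card_unionF_le (l : List (Finset Γ)) :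
    (unionF l).card ≤ (l.map Finset.card).sum := by
  induction l with
  | nil => simp [unionF]
  | cons A t ih =>
    rw [unionF_cons2]
    calc (A ∪ unionF t).card ≤ A.card + (unionF t).card := Finset.card_union_le _ _
    _ ≤ A.card + (t.map Finset.card).sum := by omega
    _ = ((A :: t).map Finset.card).sum := by simp

lemma disjoint_unionF {l : List (Finset Γ)} {A : Finset Γ} (h : ∀ B ∈ l, Disjoint A B) :
    Disjoint A (unionF l) := by
  induction l with
  | nil => simp [unionF]
  | cons B t ih =>
    rw [unionF_cons2, Finset.disjoint_union_right]
    exact ⟨h B (by simp), ih (fun C hC => h C (by simp [hC]))⟩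

lemma card_unionF_of_disjoint {l : List (Finset Γ)} (h : l.Pairwise Disjoint) :
    (unionF l).card = (l.map Finset.card).sum := by
  induction l with
  | nil => simp [unionF]
  | cons A t ih =>
    rw [unionF_cons2]
    rw [List.pairwise_cons] at h
    rw [Finset.card_union_of_disjoint (disjoint_unionF h.1), ih h.2]
    simp

/-- Double counting: each point of `U` lies in at most `|E|` tiles. -/
lemma counting (E U D : Finset Γ) :
    (∑ c ∈ D, (tileR E c ∩ U).card) ≤ E.card * U.card := by
  have key : ∀ c ∈ D, (tileR E c ∩ U).card = ∑ u ∈ U, if u ∈ tileR E c then 1 else 0 := by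
    intro c _
    rw [← Finset.card_filter, Finset.filter_mem_eq_inter, Finset.inter_comm]
  rw [Finset.sum_congr rfl key, Finset.sum_comm]
  have : ∀ u ∈ U, (∑ c ∈ D, if u ∈ tileR E c then 1 else 0) ≤ E.card := by
    intro u _
    rw [← Finset.card_filter]
    apply Finset.card_le_card_of_injOn (fun c => u * c⁻¹)
    · intro c hc
      rw [Finset.mem_coe, Finset.mem_filter] at hc
      exact mem_tileR.1 hc.2
    · intro a _ b _ hab
      simpa using hab
  calc (∑ u ∈ U, ∑ c ∈ D, if u ∈ tileR E c then 1 else 0)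
      ≤ ∑ _u ∈ U, E.card := Finset.sum_le_sum this
    _ = E.card * U.card := by rw [Finset.sum_const, smul_eq_mul, mul_comm]


section Stage
variable (E F' : Finset Γ) (ε : ℝ)

/-- the tiles of a partial tiling -/
def tiles (p : List (Γ × Finset Γ)) : List (Finset Γ) := p.map (fun q => tileR E q.1)

def Good (p : List (Γ × Finset Γ)) : Prop :=
  (∀ q ∈ p, tileR E q.1 ⊆ F' ∧ q.2 ⊆ tileR E q.1 ∧ (1 - ε) * E.card ≤ (q.2.card : ℝ)) ∧
  (p.map Prod.snd).Pairwise Disjoint ∧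
  (∀ q ∈ p, q.2 ⊆ unionF (tiles E p))

lemma stage (hε0 : 0 < ε) (hε1 : ε < 1) (hE : E.Nonempty) :
    ∃ p : List (Γ × Finset Γ), Good E F' ε p ∧
      unionF (tiles E p) ⊆ F' ∧
      ∀ D : Finset Γ, (∀ c ∈ D, tileR E c ⊆ F') →
        ε * D.card ≤ ((unionF (tiles E p)).card : ℝ) := by
  classical
  set 𝒮 : Set (Finset Γ) := {U | ∃ p, Good E F' ε p ∧ unionF (tiles E p) = U} with h𝒮
  have hfin : 𝒮.Finite := by
    apply Set.Finite.subset (F'.powerset : Finset (Finset Γ)).finite_toSet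
    rintro U ⟨p, hp, rfl⟩
    simp only [Finset.coe_powerset, Set.mem_preimage, Set.mem_powerset_iff, Finset.coe_subset]
    exact unionF_subset (by
      intro A hA
      simp only [tiles, List.mem_map] at hA
      obtain ⟨q, hq, rfl⟩ := hA
      exact (hp.1 q hq).1)
  have hne : 𝒮.Nonempty := ⟨∅, [], ⟨by simp, by simp, by simp⟩, rfl⟩
  obtain ⟨U₀, hU₀mem, hU₀max⟩ := hfin.exists_maximalFor (fun U => U.card) 𝒮 hne
  obtain ⟨p, hp, hUp⟩ := hU₀mem
  have hUsub : unionF (tiles E p) ⊆ F' := unionF_subset (by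
    intro A hA
    simp only [tiles, List.mem_map] at hA
    obtain ⟨q, hq, rfl⟩ := hA
    exact (hp.1 q hq).1)
  refine ⟨p, hp, hUsub, ?_⟩
  -- maximality: every admissible tile meets the union substantially
  have hmax : ∀ c : Γ, tileR E c ⊆ F' → ε * E.card < ((tileR E c ∩ unionF (tiles E p)).card : ℝ) := by
    intro c hc
    by_contra hcon
    push_neg at hcon
    set U := unionF (tiles E p) with hU
    set W := tileR E c \ U with hW
    have hcardW : (W.card : ℝ) = E.card - (tileR E c ∩ U).card := by
      have h1 : W = tileR E c \ (tileR E c ∩ U) := by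
        rw [hW, Finset.sdiff_inter_self_left]
      rw [h1, Finset.card_sdiff_of_subset (Finset.inter_subset_left)]
      rw [Nat.cast_sub (Finset.card_le_card Finset.inter_subset_left), tileR_card]
    have hWlow : (1 - ε) * E.card ≤ (W.card : ℝ) := by
      rw [hcardW]; nlinarith [hcon]
    have hWne : W.Nonempty := by
      rw [← Finset.card_pos]
      have hEpos : (0:ℝ) < E.card := by
        exact_mod_cast Finset.card_pos.2 hE
      have : (0:ℝ) < (W.card : ℝ) := lt_of_lt_of_le (by nlinarith) hWlow
      exact_mod_cast this
    set p' : List (Γ × Finset Γ) := (c, W) :: p with hp'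
    have htiles' : tiles E p' = tileR E c :: tiles E p := rfl
    have hU' : unionF (tiles E p') = tileR E c ∪ U := by rw [htiles', unionF_cons2, hU]
    have hGood' : Good E F' ε p' := by
      refine ⟨?_, ?_, ?_⟩
      · rintro q hq
        rcases List.mem_cons.1 hq with rfl | hq
        · exact ⟨hc, Finset.sdiff_subset, hWlow⟩
        · exact hp.1 q hq
      · rw [hp', List.map_cons, List.pairwise_cons]
        refine ⟨?_, hp.2.1⟩
        intro W' hW'
        simp only [List.mem_map] at hW'
        obtain ⟨q, hq, rfl⟩ := hW'
        have : q.2 ⊆ U := hp.2.2 q hq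
        exact Finset.disjoint_left.2 fun x hxW hxq => (Finset.mem_sdiff.1 hxW).2 (this hxq)
      · rintro q hq
        rw [hU']
        rcases List.mem_cons.1 hq with rfl | hq
        · exact Finset.Subset.trans Finset.sdiff_subset Finset.subset_union_left
        · exact Finset.Subset.trans (hp.2.2 q hq) Finset.subset_union_right
    have hmem' : tileR E c ∪ U ∈ 𝒮 := ⟨p', hGood', hU'⟩
    have hlt : U₀.card < (tileR E c ∪ U).card := by
      rw [← hUp]
      apply Finset.card_lt_card
      constructor
      · exact Finset.subset_union_right
      · intro hsub
        obtain ⟨x, hx⟩ := hWne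
        have hx' := Finset.mem_sdiff.1 hx
        exact hx'.2 (hsub (Finset.mem_union_left _ hx'.1))
    have : (tileR E c ∪ U).card ≤ U₀.card := hU₀max hmem' (le_of_lt hlt)
    omega
  -- counting
  intro D hD
  have hEpos : (0:ℝ) < E.card := by exact_mod_cast Finset.card_pos.2 hE
  set U := unionF (tiles E p) with hU
  have h1 : ∀ c ∈ D, ε * E.card ≤ ((tileR E c ∩ U).card : ℝ) := fun c hc =>
    le_of_lt (hmax c (hD c hc))
  have h2 : ε * E.card * D.card ≤ ((∑ c ∈ D, (tileR E c ∩ U).card : ℕ) : ℝ) := by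
    push_cast
    calc ε * E.card * D.card = ∑ _c ∈ D, ε * E.card := by
          rw [Finset.sum_const, nsmul_eq_mul]; ring
      _ ≤ ∑ c ∈ D, ((tileR E c ∩ U).card : ℝ) := Finset.sum_le_sum h1
  have h3 : ((∑ c ∈ D, (tileR E c ∩ U).card : ℕ) : ℝ) ≤ (E.card : ℝ) * U.card := by
    exact_mod_cast counting E U D
  nlinarith [h2, h3]

end Stage


lemma sdiff_sdiff_union' (s t u : Finset Γ) : (s \ t) \ u = s \ (t ∪ u) := by
  ext x; simp only [Finset.mem_sdiff, Finset.mem_union]; tauto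

/-- total size of tiles with `(1-ε)`-witnesses that are pairwise disjoint inside `X` -/
lemma sum_tiles_le (ε : ℝ) (X : Finset Γ) (l : List (Finset Γ × Finset Γ))
    (h1 : ∀ p ∈ l, p.2 ⊆ p.1 ∧ (1 - ε) * p.1.card ≤ (p.2.card : ℝ))
    (h2 : (l.map Prod.snd).Pairwise Disjoint)
    (h3 : ∀ p ∈ l, p.1 ⊆ X) :
    (1 - ε) * (l.map (fun p => ((p.1.card : ℕ) : ℝ))).sum ≤ (X.card : ℝ) := by
  have step1 : (1 - ε) * (l.map (fun p => ((p.1.card : ℕ) : ℝ))).sum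
      = (l.map (fun p => (1 - ε) * (p.1.card : ℝ))).sum :=
    (List.sum_map_mul_left l _ _).symm
  have step2 : (l.map (fun p => (1 - ε) * (p.1.card : ℝ))).sum
      ≤ (l.map (fun p => ((p.2.card : ℕ) : ℝ))).sum :=
    List.sum_le_sum (fun p hp => (h1 p hp).2)
  have step3 : (l.map (fun p => ((p.2.card : ℕ) : ℝ))).sum
      = (((l.map Prod.snd).map Finset.card).sum : ℕ) := by
    rw [Nat.cast_list_sum, List.map_map, List.map_map]; rfl
  have step4 : ((l.map Prod.snd).map Finset.card).sum = (unionF (l.map Prod.snd)).card :=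
    (card_unionF_of_disjoint h2).symm
  have step5 : unionF (l.map Prod.snd) ⊆ X := by
    apply unionF_subset
    intro A hA
    simp only [List.mem_map] at hA
    obtain ⟨p, hp, rfl⟩ := hA
    exact (h1 p hp).1.trans (h3 p hp)
  have step6 : ((unionF (l.map Prod.snd)).card : ℝ) ≤ (X.card : ℝ) := by
    exact_mod_cast Finset.card_le_card step5
  rw [step1]
  calc _ ≤ _ := step2
    _ = _ := step3
    _ ≤ (X.card : ℝ) := by rw [step4] at *; exact step6

section Iter

variable (Es : ℕ → Finset Γ) (K : ℕ) (ε η : ℝ) (F₀ : Finset Γ) (A : ℝ)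

lemma iter (hε0 : 0 < ε) (hε2 : ε ≤ 1/2) (hη : 0 ≤ η) (hA : 0 ≤ A)
    (hshape_ne : ∀ j, 1 ≤ j → j ≤ K → (Es j).Nonempty)
    (hshape_inv : ∀ s j, 1 ≤ s → s < j → j ≤ K →
      (∑ e ∈ Es s, (((lmul e⁻¹ (Es j)) \ Es j).card : ℝ)) ≤ η * (Es j).card)
    (hbdry : ∀ s, 1 ≤ s → s ≤ K → ((F₀ \ Dint (Es s) F₀).card : ℝ) ≤ A) :
    ∀ k, k ≤ K → ∀ (F' : Finset Γ) (prior : List (Finset Γ × Finset Γ)),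
    (∀ p ∈ prior, (∃ j c, k < j ∧ j ≤ K ∧ p.1 = tileR (Es j) c) ∧ p.2 ⊆ p.1 ∧
        (1 - ε) * p.1.card ≤ (p.2.card : ℝ)) →
    (∀ p ∈ prior, p.1 ⊆ F₀) →
    ((prior.map Prod.snd).Pairwise Disjoint) →
    F' = F₀ \ unionF (prior.map Prod.fst) →
    ∃ q : List (Finset Γ × Finset Γ),
      (∀ p ∈ q, (∃ j c, 1 ≤ j ∧ j ≤ k ∧ p.1 = tileR (Es j) c) ∧ p.2 ⊆ p.1 ∧
        (1 - ε) * p.1.card ≤ (p.2.card : ℝ)) ∧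
      (∀ p ∈ q, p.1 ⊆ F') ∧
      (((prior ++ q).map Prod.snd).Pairwise Disjoint) ∧
      ((F' \ unionF (q.map Prod.fst)).card : ℝ) ≤
        (1 - ε) ^ k * ((F'.card : ℝ) - (A + 2 * η * F₀.card)) + (A + 2 * η * F₀.card) := by
  intro k
  induction k with
  | zero =>
    intro _ F' prior _ _ hdisj _
    refine ⟨[], by simp, by simp, by simpa using hdisj, ?_⟩
    simp [unionF]
  | succ k ih =>
    intro hkK F' prior hprior hpriorF₀ hdisj hF'
    set B : ℝ := A + 2 * η * F₀.card with hB
    set E : Finset Γ := Es (k + 1) with hEdef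
    have hk1K : k + 1 ≤ K := hkK
    have hEne : E.Nonempty := hshape_ne (k+1) (by omega) hk1K
    have hF'sub : F' ⊆ F₀ := by rw [hF']; exact Finset.sdiff_subset
    -- total size of prior tiles
    have hpriorprops : ∀ p ∈ prior, p.2 ⊆ p.1 ∧ (1 - ε) * p.1.card ≤ (p.2.card : ℝ) :=
      fun p hp => ⟨(hprior p hp).2.1, (hprior p hp).2.2⟩
    have hsumprior : (1 - ε) * (prior.map (fun p => ((p.1.card : ℕ) : ℝ))).sum ≤ (F₀.card : ℝ) :=
      sum_tiles_le ε F₀ prior hpriorprops hdisj hpriorF₀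
    have hsumnonneg : 0 ≤ (prior.map (fun p => ((p.1.card : ℕ) : ℝ))).sum :=
      List.sum_nonneg (by
        intro x hx
        simp only [List.mem_map] at hx
        obtain ⟨p, _, rfl⟩ := hx
        positivity)
    have hsumprior2 : (prior.map (fun p => ((p.1.card : ℕ) : ℝ))).sum ≤ 2 * F₀.card := by
      nlinarith
    -- boundary of F' wrt E
    have hbsub : (F' \ Dint E F') ⊆ (F₀ \ Dint E F₀) ∪
        unionF (prior.map (fun p => E.biUnion (fun e => (lmul e⁻¹ p.1) \ p.1))) := by
      intro x hx
      rw [Finset.mem_sdiff, mem_Dint] at hx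
      obtain ⟨hxF', hnd⟩ := hx
      push_neg at hnd
      obtain ⟨e, he, hex⟩ := hnd hxF'
      have hxF₀ : x ∈ F₀ := hF'sub hxF'
      by_cases hcase : e * x ∈ F₀
      · have hmem : e * x ∈ unionF (prior.map Prod.fst) := by
          by_contra hne
          rw [hF'] at hex
          exact hex (Finset.mem_sdiff.2 ⟨hcase, hne⟩)
        obtain ⟨T, hT, hxT⟩ := mem_unionF.1 hmem
        simp only [List.mem_map] at hT
        obtain ⟨p, hp, rfl⟩ := hT
        apply Finset.mem_union_right
        apply subset_unionF (l := prior.map (fun p => E.biUnion (fun e => (lmul e⁻¹ p.1) \ p.1)))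
          (List.mem_map.2 ⟨p, hp, rfl⟩)
        rw [Finset.mem_biUnion]
        refine ⟨e, he, Finset.mem_sdiff.2 ⟨?_, ?_⟩⟩
        · rw [lmul]
          exact Finset.mem_image.2 ⟨e * x, hxT, by group⟩
        · intro hxp
          have : x ∈ unionF (prior.map Prod.fst) :=
            subset_unionF (List.mem_map.2 ⟨p, hp, rfl⟩) hxp
          rw [hF'] at hxF'
          exact (Finset.mem_sdiff.1 hxF').2 this
      · apply Finset.mem_union_left
        rw [Finset.mem_sdiff, mem_Dint]
        exact ⟨hxF₀, fun h => hcase (h.2 e he)⟩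
    -- the card of the union of boundary-of-tiles
    have hbdrytiles : ((unionF (prior.map (fun p => E.biUnion (fun e => (lmul e⁻¹ p.1) \ p.1)))).card : ℝ)
        ≤ η * (prior.map (fun p => ((p.1.card : ℕ) : ℝ))).sum := by
      calc ((unionF (prior.map (fun p => E.biUnion (fun e => (lmul e⁻¹ p.1) \ p.1)))).card : ℝ)
          ≤ (((prior.map (fun p => E.biUnion (fun e => (lmul e⁻¹ p.1) \ p.1))).map Finset.card).sum : ℕ) := by
            exact_mod_cast card_unionF_le _
        _ = (prior.map (fun p => (((E.biUnion (fun e => (lmul e⁻¹ p.1) \ p.1)).card : ℕ) : ℝ))).sum := by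
            rw [Nat.cast_list_sum, List.map_map, List.map_map]; rfl
        _ ≤ (prior.map (fun p => η * ((p.1.card : ℕ) : ℝ))).sum := by
            apply List.sum_le_sum
            intro p hp
            obtain ⟨⟨j, c, hkj, hjK, hpeq⟩, _, _⟩ := hprior p hp
            have hcard : ((E.biUnion (fun e => (lmul e⁻¹ p.1) \ p.1)).card : ℕ)
                ≤ ∑ e ∈ E, ((lmul e⁻¹ p.1) \ p.1).card := Finset.card_biUnion_le
            have heq : ∀ e : Γ, ((lmul e⁻¹ p.1) \ p.1).card = ((lmul e⁻¹ (Es j)) \ Es j).card := by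
              intro e
              rw [hpeq, lmul_tileR, tileR_sdiff, tileR_card]
            have : (∑ e ∈ E, (((lmul e⁻¹ p.1) \ p.1).card : ℝ)) ≤ η * (Es j).card := by
              calc (∑ e ∈ E, (((lmul e⁻¹ p.1) \ p.1).card : ℝ))
                  = ∑ e ∈ E, (((lmul e⁻¹ (Es j)) \ Es j).card : ℝ) := by
                    apply Finset.sum_congr rfl; intro e _; exact_mod_cast heq e
                _ ≤ η * (Es j).card := hshape_inv (k+1) j (by omega) (by omega) hjK
            have hc2 : (p.1.card : ℝ) = ((Es j).card : ℝ) := by rw [hpeq, tileR_card]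
            calc (((E.biUnion (fun e => (lmul e⁻¹ p.1) \ p.1)).card : ℕ) : ℝ)
                ≤ ∑ e ∈ E, (((lmul e⁻¹ p.1) \ p.1).card : ℝ) := by exact_mod_cast hcard
              _ ≤ η * (Es j).card := this
              _ = η * ((p.1.card : ℕ) : ℝ) := by rw [hc2]
        _ = η * (prior.map (fun p => ((p.1.card : ℕ) : ℝ))).sum := List.sum_map_mul_left _ _ _
    have hbF' : ((F' \ Dint E F').card : ℝ) ≤ B := by
      have h1 : ((F' \ Dint E F').card : ℝ) ≤ ((F₀ \ Dint E F₀).card : ℝ)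
          + ((unionF (prior.map (fun p => E.biUnion (fun e => (lmul e⁻¹ p.1) \ p.1)))).card : ℝ) := by
        have := Finset.card_le_card hbsub
        have h2 := Finset.card_union_le (F₀ \ Dint E F₀)
          (unionF (prior.map (fun p => E.biUnion (fun e => (lmul e⁻¹ p.1) \ p.1))))
        push_cast
        exact_mod_cast le_trans this h2
      have h3 := hbdry (k+1) (by omega) hk1K
      have h4 : η * (prior.map (fun p => ((p.1.card : ℕ) : ℝ))).sum ≤ 2 * η * F₀.card := by
        nlinarith
      rw [hB]
      calc ((F' \ Dint E F').card : ℝ) ≤ _ := h1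
        _ ≤ A + 2 * η * F₀.card := by
            have h5 := le_trans hbdrytiles h4
            rw [← hEdef] at h3
            linarith
    -- apply the stage lemma
    obtain ⟨pst, hGood, hUsub, hcover⟩ := stage E F' ε hε0 (by linarith) hEne
    set U : Finset Γ := unionF (tiles E pst) with hUdef
    have hDsubF' : Dint E F' ⊆ F' := Dint_subset E F'
    have hDcard : (F'.card : ℝ) - B ≤ ((Dint E F').card : ℝ) := by
      have h1 : (F' \ Dint E F').card = F'.card - (Dint E F').card :=
        Finset.card_sdiff_of_subset hDsubF'
      have h2 : (Dint E F').card ≤ F'.card := Finset.card_le_card hDsubF'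
      have h3 : ((F' \ Dint E F').card : ℝ) = (F'.card : ℝ) - (Dint E F').card := by
        rw [h1, Nat.cast_sub h2]
      rw [h3] at hbF'
      linarith
    have hUcard : ε * ((F'.card : ℝ) - B) ≤ (U.card : ℝ) := by
      have h1 := hcover (Dint E F') (fun c hc => tileR_subset_of_mem_Dint hc)
      have h2 : ε * ((F'.card : ℝ) - B) ≤ ε * ((Dint E F').card : ℝ) :=
        mul_le_mul_of_nonneg_left hDcard hε0.le
      exact le_trans h2 h1
    -- the new tiles, with their tile sets
    set new : List (Finset Γ × Finset Γ) := pst.map (fun q => (tileR E q.1, q.2)) with hnewdef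
    have hnewfst : new.map Prod.fst = tiles E pst := by
      rw [hnewdef, List.map_map]; rfl
    have hnewsnd : new.map Prod.snd = pst.map Prod.snd := by
      rw [hnewdef, List.map_map]; rfl
    set F'' : Finset Γ := F' \ U with hF''def
    have hUF' : U ⊆ F' := hUsub
    have hF''card : ((F''.card : ℝ)) = (F'.card : ℝ) - (U.card : ℝ) := by
      rw [hF''def, Finset.card_sdiff_of_subset hUF', Nat.cast_sub (Finset.card_le_card hUF')]
    -- properties of new
    have hnewprops : ∀ p ∈ new, (∃ j c, k < j ∧ j ≤ K ∧ p.1 = tileR (Es j) c) ∧ p.2 ⊆ p.1 ∧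
        (1 - ε) * p.1.card ≤ (p.2.card : ℝ) := by
      intro p hp
      rw [hnewdef, List.mem_map] at hp
      obtain ⟨q, hq, rfl⟩ := hp
      obtain ⟨h1, h2, h3⟩ := hGood.1 q hq
      exact ⟨⟨k+1, q.1, by omega, hk1K, rfl⟩, h2, by rw [tileR_card]; exact h3⟩
    have hnewF' : ∀ p ∈ new, p.1 ⊆ F' := by
      intro p hp
      rw [hnewdef, List.mem_map] at hp
      obtain ⟨q, hq, rfl⟩ := hp
      exact (hGood.1 q hq).1
    have hdisj' : ((prior ++ new).map Prod.snd).Pairwise Disjoint := by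
      rw [List.map_append, List.pairwise_append]
      refine ⟨hdisj, by rw [hnewsnd]; exact hGood.2.1, ?_⟩
      intro a ha b hb
      rw [List.mem_map] at ha
      rw [hnewsnd, List.mem_map] at hb
      obtain ⟨p, hp, rfl⟩ := ha
      obtain ⟨q, hq, rfl⟩ := hb
      have hap : p.2 ⊆ unionF (prior.map Prod.fst) :=
        ((hprior p hp).2.1).trans (subset_unionF (List.mem_map.2 ⟨p, hp, rfl⟩))
      have hbq : q.2 ⊆ F' := ((hGood.1 q hq).2.1).trans ((hGood.1 q hq).1)
      rw [Finset.disjoint_left]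
      intro x hxa hxb
      have h1 : x ∈ unionF (prior.map Prod.fst) := hap hxa
      have h2 : x ∈ F' := hbq hxb
      rw [hF'] at h2
      exact (Finset.mem_sdiff.1 h2).2 h1
    have hF''eq : F'' = F₀ \ unionF ((prior ++ new).map Prod.fst) := by
      rw [List.map_append, unionF_append, hnewfst, ← sdiff_sdiff_union', ← hF', hF''def]
    obtain ⟨qr, hqr1, hqr2, hqr3, hqr4⟩ := ih (by omega) F'' (prior ++ new)
      (fun p hp => (List.mem_append.1 hp).elim
        (fun h => by
          obtain ⟨⟨j, c, hj1, hj2, hj3⟩, h4, h5⟩ := hprior p h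
          exact ⟨⟨j, c, by omega, hj2, hj3⟩, h4, h5⟩)
        (fun h => hnewprops p h))
      (fun p hp => (List.mem_append.1 hp).elim
        (fun h => hpriorF₀ p h)
        (fun h => (hnewF' p h).trans hF'sub))
      hdisj' hF''eq
    refine ⟨new ++ qr, ?_, ?_, ?_, ?_⟩
    · intro p hp
      rcases List.mem_append.1 hp with h | h
      · rw [hnewdef, List.mem_map] at h
        obtain ⟨qq, hqq, rfl⟩ := h
        obtain ⟨h1, h2, h3⟩ := hGood.1 qq hqq
        exact ⟨⟨k+1, qq.1, by omega, le_refl _, rfl⟩, h2, by rw [tileR_card]; exact h3⟩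
      · obtain ⟨⟨j, c, hj1, hj2, hj3⟩, h4, h5⟩ := hqr1 p h
        exact ⟨⟨j, c, hj1, by omega, hj3⟩, h4, h5⟩
    · intro p hp
      rcases List.mem_append.1 hp with h | h
      · exact hnewF' p h
      · exact (hqr2 p h).trans (by rw [hF''def]; exact Finset.sdiff_subset)
    · rw [← List.append_assoc]; exact hqr3
    · have hrem : F' \ unionF ((new ++ qr).map Prod.fst) = F'' \ unionF (qr.map Prod.fst) := by
        rw [List.map_append, unionF_append, hnewfst, ← sdiff_sdiff_union', hF''def]
      rw [hrem]
      have hstep : (F''.card : ℝ) - B ≤ (1 - ε) * ((F'.card : ℝ) - B) := by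
        rw [hF''card]; nlinarith
      have hpow : (0:ℝ) ≤ (1 - ε) ^ k := pow_nonneg (by linarith) k
      calc ((F'' \ unionF (qr.map Prod.fst)).card : ℝ)
          ≤ (1 - ε) ^ k * ((F''.card : ℝ) - B) + B := hqr4
        _ ≤ (1 - ε) ^ k * ((1 - ε) * ((F'.card : ℝ) - B)) + B := by
            have := mul_le_mul_of_nonneg_left hstep hpow
            linarith
        _ = (1 - ε) ^ (k + 1) * ((F'.card : ℝ) - B) + B := by ring

end Iter

section Flemmas

variable (f : Finset Γ → ℝ)

lemma f_singleton (hinv : ∀ (F : Finset Γ) (g : Γ), F.Nonempty → f (F.image (fun x => x * g)) = f F)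
    (x : Γ) : f {x} = f {1} := by
  have h := hinv {1} x (by simp)
  simpa using h

lemma f_le_card (hnonneg : ∀ F : Finset Γ, F.Nonempty → 0 ≤ f F)
    (hinv : ∀ (F : Finset Γ) (g : Γ), F.Nonempty → f (F.image (fun x => x * g)) = f F)
    (hsub : ∀ E F : Finset Γ, E.Nonempty → F.Nonempty → f (E ∪ F) ≤ f E + f F) :
    ∀ R : Finset Γ, R.Nonempty → f R ≤ R.card * f {1} := by
  intro R
  induction R using Finset.induction_on with
  | empty => intro h; exact absurd h (by simp)
  | @insert x R hx ih =>
    intro _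
    rcases R.eq_empty_or_nonempty with rfl | hR
    · simp [f_singleton f hinv x]
    · have h1 : insert x R = {x} ∪ R := rfl
      rw [h1]
      calc f ({x} ∪ R) ≤ f {x} + f R := hsub {x} R (by simp) hR
        _ ≤ f {1} + R.card * f {1} := by
            rw [f_singleton f hinv x]
            linarith [ih hR]
        _ = (insert x R).card * f {1} := by
            rw [Finset.card_insert_of_notMem hx]
            push_cast
            ring

lemma f_tileR (hinv : ∀ (F : Finset Γ) (g : Γ), F.Nonempty → f (F.image (fun x => x * g)) = f F)
    (E : Finset Γ) (hE : E.Nonempty) (c : Γ) : f (tileR E c) = f E := hinv E c hE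

lemma subadd_unionF (hnonneg : ∀ F : Finset Γ, F.Nonempty → 0 ≤ f F)
    (hsub : ∀ E F : Finset Γ, E.Nonempty → F.Nonempty → f (E ∪ F) ≤ f E + f F) :
    ∀ l : List (Finset Γ), (∀ A ∈ l, A.Nonempty) → (unionF l).Nonempty →
      f (unionF l) ≤ (l.map f).sum := by
  intro l
  induction l with
  | nil => intro _ h; simp [unionF] at h
  | cons A t ih =>
    intro hne _
    rw [unionF_cons2]
    rcases (unionF t).eq_empty_or_nonempty with he | hne'
    · rw [he, Finset.union_empty]
      have : 0 ≤ (t.map f).sum := List.sum_nonneg (by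
        intro x hx
        rw [List.mem_map] at hx
        obtain ⟨B, hB, rfl⟩ := hx
        exact hnonneg B (hne B (by simp [hB])))
      simp only [List.map_cons, List.sum_cons]
      linarith
    · calc f (A ∪ unionF t) ≤ f A + f (unionF t) := hsub _ _ (hne A (by simp)) hne'
        _ ≤ f A + (t.map f).sum := by
            linarith [ih (fun B hB => hne B (by simp [hB])) hne']
        _ = ((A :: t).map f).sum := by simp

lemma account (hnonneg : ∀ F : Finset Γ, F.Nonempty → 0 ≤ f F)
    (hinv : ∀ (F : Finset Γ) (g : Γ), F.Nonempty → f (F.image (fun x => x * g)) = f F)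
    (hsub : ∀ E F : Finset Γ, E.Nonempty → F.Nonempty → f (E ∪ F) ≤ f E + f F)
    (F₀ : Finset Γ) (hF₀ : F₀.Nonempty) (l : List (Finset Γ))
    (hne : ∀ A ∈ l, A.Nonempty) (hsubF : ∀ A ∈ l, A ⊆ F₀) :
    f F₀ ≤ (l.map f).sum + ((F₀ \ unionF l).card : ℝ) * f {1} := by
  set U : Finset Γ := unionF l with hU
  set R : Finset Γ := F₀ \ U with hR
  have hUF : U ⊆ F₀ := unionF_subset hsubF
  have hsplit : F₀ = U ∪ R := by
    rw [hR, Finset.union_sdiff_of_subset hUF]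
  have hf1 : 0 ≤ f {1} := hnonneg {1} (by simp)
  rcases l.eq_nil_or_concat with rfl | ⟨L, b, rfl⟩
  · simp only [List.map_nil, List.sum_nil, zero_add]
    have hRF : R = F₀ := by
      rw [hR]
      show F₀ \ unionF [] = F₀
      rw [show unionF ([] : List (Finset Γ)) = ∅ from rfl, Finset.sdiff_empty]
    rw [hRF]
    exact f_le_card f hnonneg hinv hsub F₀ hF₀
  · have hlne : L.concat b ≠ [] := by simp
    have hUne : U.Nonempty := by
      obtain ⟨A, hA⟩ := List.exists_mem_of_ne_nil _ hlne
      exact ((hne A hA).mono (subset_unionF hA))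
    have hfU : f U ≤ ((L.concat b).map f).sum := subadd_unionF f hnonneg hsub _ hne hUne
    rcases R.eq_empty_or_nonempty with he | hRne
    · have : F₀ = U := by rw [hsplit, he, Finset.union_empty]
      rw [this, he]
      simp only [Finset.card_empty, Nat.cast_zero, zero_mul, add_zero]
      exact hfU
    · calc f F₀ = f (U ∪ R) := by rw [← hsplit]
        _ ≤ f U + f R := hsub _ _ hUne hRne
        _ ≤ ((L.concat b).map f).sum + R.card * f {1} := by
            linarith [f_le_card f hnonneg hinv hsub R hRne]

end Flemmas

section Folner

lemma sdiff_lmul_le (g : Γ) (E : Finset Γ) :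
    (((lmul g E) \ E).card : ℝ) ≤ ((symmDiff E (lmul g E)).card : ℝ) := by
  have h : (lmul g E) \ E ⊆ symmDiff E (lmul g E) := by
    rw [symmDiff_def]
    exact (le_sup_right : (lmul g E) \ E ≤ (E \ lmul g E) ⊔ ((lmul g E) \ E))
  exact_mod_cast Finset.card_le_card h

lemma folner_eventually (H : ℕ → Finset Γ) (hH : IsFolner H) (T : Finset Γ) (δ : ℝ) (hδ : 0 < δ) :
    ∀ᶠ m in atTop, ∀ g ∈ T,
      ((symmDiff (H m) (lmul g (H m))).card : ℝ) ≤ δ * (H m).card := by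
  rw [Filter.eventually_all_finset]
  intro g _
  have h1 := (hH.2 g).eventually_lt_const hδ
  filter_upwards [h1] with m hm
  have hpos : (0:ℝ) < ((H m).card : ℝ) := by
    exact_mod_cast Finset.card_pos.2 (hH.1 m)
  rw [div_lt_iff₀ hpos] at hm
  exact le_of_lt hm

lemma bdry_le (E F : Finset Γ) :
    ((F \ Dint E F).card : ℝ) ≤ ∑ e ∈ E, ((symmDiff F (lmul e F)).card : ℝ) := by
  have hsub : F \ Dint E F ⊆ E.biUnion (fun e => F.filter (fun c => e * c ∉ F)) := by
    intro c hc
    rw [Finset.mem_sdiff, mem_Dint] at hc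
    push_neg at hc
    obtain ⟨e, he, hec⟩ := hc.2 hc.1
    rw [Finset.mem_biUnion]
    exact ⟨e, he, Finset.mem_filter.2 ⟨hc.1, hec⟩⟩
  have h1 : (F \ Dint E F).card ≤ ∑ e ∈ E, (F.filter (fun c => e * c ∉ F)).card :=
    le_trans (Finset.card_le_card hsub) Finset.card_biUnion_le
  have h2 : ∀ e ∈ E, ((F.filter (fun c => e * c ∉ F)).card : ℝ)
      ≤ ((symmDiff F (lmul e F)).card : ℝ) := by
    intro e _
    have hstep : (F.filter (fun c => e * c ∉ F)).card ≤ ((lmul e F) \ F).card := by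
      apply Finset.card_le_card_of_injOn (fun c => e * c)
      · intro c hc
        rw [Finset.mem_coe, Finset.mem_filter] at hc
        rw [Finset.mem_coe, Finset.mem_sdiff]
        exact ⟨Finset.mem_image.2 ⟨c, hc.1, rfl⟩, hc.2⟩
      · intro a _ b _ hab
        simpa using hab
    calc ((F.filter (fun c => e * c ∉ F)).card : ℝ) ≤ (((lmul e F) \ F).card : ℝ) := by
          exact_mod_cast hstep
      _ ≤ _ := sdiff_lmul_le e F
  calc ((F \ Dint E F).card : ℝ) ≤ ((∑ e ∈ E, (F.filter (fun c => e * c ∉ F)).card : ℕ) : ℝ) := by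
        exact_mod_cast h1
    _ = ∑ e ∈ E, ((F.filter (fun c => e * c ∉ F)).card : ℝ) := by push_cast; rfl
    _ ≤ ∑ e ∈ E, ((symmDiff F (lmul e F)).card : ℝ) := Finset.sum_le_sum h2

lemma shapes (f : Finset Γ → ℝ) (H : ℕ → Finset Γ) (hH : IsFolner H) (b η : ℝ) (hη : 0 < η)
    (hb : ∃ᶠ m in atTop, f (H m) / ((H m).card : ℝ) < b) :
    ∀ K : ℕ, ∃ Es : ℕ → Finset Γ,
      (∀ j, 1 ≤ j → j ≤ K → (Es j).Nonempty ∧ f (Es j) ≤ b * (Es j).card) ∧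
      (∀ s j, 1 ≤ s → s < j → j ≤ K →
        (∑ e ∈ Es s, (((lmul e⁻¹ (Es j)) \ Es j).card : ℝ)) ≤ η * (Es j).card) := by
  intro K
  induction K with
  | zero =>
    exact ⟨fun _ => ∅, fun j h1 h2 => absurd (le_trans h1 h2) (by omega), fun s j h1 h2 h3 => by omega⟩
  | succ K ih =>
    obtain ⟨Es, h1, h2⟩ := ih
    set T : Finset Γ := ((Finset.Icc 1 K).biUnion Es).image (fun x => x⁻¹) with hT
    set N : ℕ := ((Finset.Icc 1 K).biUnion Es).card + 1 with hN
    have hδ : (0:ℝ) < η / N := by positivity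
    have hev := folner_eventually H hH T (η / N) hδ
    obtain ⟨m, hm1, hm2⟩ := (hb.and_eventually hev).exists
    set E' : Finset Γ := H m with hE'
    have hE'ne : E'.Nonempty := hH.1 m
    have hE'pos : (0:ℝ) < (E'.card : ℝ) := by exact_mod_cast Finset.card_pos.2 hE'ne
    have hfE' : f E' ≤ b * E'.card := by
      rw [div_lt_iff₀ hE'pos] at hm1
      exact le_of_lt hm1
    refine ⟨fun i => if i = K + 1 then E' else Es i, ?_, ?_⟩
    · intro j hj1 hj2
      by_cases hj : j = K + 1
      · subst hj; simp only [if_pos rfl]; exact ⟨hE'ne, hfE'⟩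
      · simp only [if_neg hj]; exact h1 j hj1 (by omega)
    · intro s j hs1 hsj hjK
      have hsK : s ≤ K := by omega
      have hsne : s ≠ K + 1 := by omega
      simp only [if_neg hsne]
      by_cases hj : j = K + 1
      · subst hj
        simp only [if_pos rfl]
        have hcard : ∀ e ∈ Es s, (((lmul e⁻¹ E') \ E').card : ℝ) ≤ (η / N) * E'.card := by
          intro e he
          have heT : e⁻¹ ∈ T := by
            rw [hT]
            apply Finset.mem_image.2
            exact ⟨e, Finset.mem_biUnion.2 ⟨s, Finset.mem_Icc.2 ⟨hs1, hsK⟩, he⟩, rfl⟩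
          calc (((lmul e⁻¹ E') \ E').card : ℝ) ≤ ((symmDiff E' (lmul e⁻¹ E')).card : ℝ) :=
                sdiff_lmul_le e⁻¹ E'
            _ ≤ (η / N) * E'.card := hm2 e⁻¹ heT
        have hcardEs : ((Es s).card : ℝ) ≤ (N : ℝ) - 1 := by
          have hsub2 : Es s ⊆ (Finset.Icc 1 K).biUnion Es :=
            Finset.subset_biUnion_of_mem Es (Finset.mem_Icc.2 ⟨hs1, hsK⟩)
          have hle := Finset.card_le_card hsub2
          have hle2 : ((Es s).card:ℝ) ≤ (((Finset.Icc 1 K).biUnion Es).card:ℝ) := by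
            exact_mod_cast hle
          rw [hN]
          push_cast
          linarith
        calc (∑ e ∈ Es s, (((lmul e⁻¹ E') \ E').card : ℝ))
            ≤ ∑ _e ∈ Es s, (η / N) * E'.card := Finset.sum_le_sum hcard
          _ = ((Es s).card : ℝ) * ((η / N) * E'.card) := by
              rw [Finset.sum_const, nsmul_eq_mul]
          _ ≤ η * E'.card := by
              have hNpos : (0:ℝ) < (N:ℝ) := by positivity
              have h3 : ((Es s).card : ℝ) ≤ (N:ℝ) := by linarith
              have h4 : ((Es s).card:ℝ) * ((η/N) * E'.card) ≤ (N:ℝ) * ((η/N)*E'.card) :=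
                mul_le_mul_of_nonneg_right h3 (by positivity)
              have h5 : (N:ℝ) * ((η/N)*E'.card) = η * E'.card := by
                field_simp
              linarith
      · simp only [if_neg hj]
        exact h2 s j hs1 hsj (by omega)

end Folner

lemma upper_est (f : Finset Γ → ℝ)
    (hnonneg : ∀ F : Finset Γ, F.Nonempty → 0 ≤ f F)
    (hinv : ∀ (F : Finset Γ) (g : Γ), F.Nonempty → f (F.image (fun x => x * g)) = f F)
    (hsub : ∀ E F : Finset Γ, E.Nonempty → F.Nonempty → f (E ∪ F) ≤ f E + f F)
    (b ε : ℝ) (hb0 : 0 ≤ b) (hε0 : 0 < ε) (hε2 : ε ≤ 1/2)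
    (K : ℕ) (Es : ℕ → Finset Γ)
    (hEs1 : ∀ j, 1 ≤ j → j ≤ K → (Es j).Nonempty ∧ f (Es j) ≤ b * (Es j).card)
    (hEs2 : ∀ s j, 1 ≤ s → s < j → j ≤ K →
      (∑ e ∈ Es s, (((lmul e⁻¹ (Es j)) \ Es j).card : ℝ)) ≤ (ε/8) * (Es j).card)
    (hK : (1-ε)^K ≤ ε)
    (F₀ : Finset Γ) (hF₀ : F₀.Nonempty)
    (hbdry : ∀ s, 1 ≤ s → s ≤ K → ((F₀ \ Dint (Es s) F₀).card : ℝ) ≤ (ε/8) * F₀.card) :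
    f F₀ ≤ (b/(1-ε) + 2*ε*f {1}) * F₀.card := by
  have hf1 : 0 ≤ f {1} := hnonneg {1} (by simp)
  have hF₀pos : (0:ℝ) < (F₀.card : ℝ) := by exact_mod_cast Finset.card_pos.2 hF₀
  have hA : (0:ℝ) ≤ (ε/8) * F₀.card := by positivity
  obtain ⟨q, hq1, hq2, hq3, hq4⟩ := iter Es K ε (ε/8) F₀ ((ε/8) * F₀.card)
    hε0 hε2 (by linarith) hA (fun j h1 h2 => (hEs1 j h1 h2).1) hEs2 hbdry K (le_refl K)
    F₀ [] (by simp) (by simp) (by simp)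
    (by rw [show unionF (List.map Prod.fst ([] : List (Finset Γ × Finset Γ))) = ∅ from rfl,
         Finset.sdiff_empty])
  set B : ℝ := (ε/8) * F₀.card + 2 * (ε/8) * F₀.card with hB
  have hBval : B = (3*ε/8) * F₀.card := by rw [hB]; ring
  have hB0 : 0 ≤ B := by rw [hBval]; positivity
  -- remainder bound
  have hrem : ((F₀ \ unionF (q.map Prod.fst)).card : ℝ) ≤ 2 * ε * F₀.card := by
    have h1 : ((F₀ \ unionF (q.map Prod.fst)).card : ℝ) ≤ (1-ε)^K * ((F₀.card : ℝ) - B) + B := hq4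
    have hpow0 : (0:ℝ) ≤ (1-ε)^K := pow_nonneg (by linarith) K
    have h2 : (1-ε)^K * ((F₀.card : ℝ) - B) ≤ (1-ε)^K * (F₀.card : ℝ) := by
      apply mul_le_mul_of_nonneg_left _ hpow0
      linarith
    have h3 : (1-ε)^K * (F₀.card : ℝ) ≤ ε * F₀.card :=
      mul_le_mul_of_nonneg_right hK (le_of_lt hF₀pos)
    rw [hBval] at h1 h2
    nlinarith
  -- tiles are nonempty translates with controlled f
  have htile : ∀ p ∈ q, p.1.Nonempty ∧ f p.1 ≤ b * p.1.card := by
    intro p hp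
    obtain ⟨⟨j, c, hj1, hj2, hj3⟩, _, _⟩ := hq1 p hp
    obtain ⟨hne, hfb⟩ := hEs1 j hj1 hj2
    constructor
    · rw [hj3]; exact tileR_nonempty hne c
    · rw [hj3, f_tileR f hinv (Es j) hne c, tileR_card]
      exact hfb
  -- accounting
  have hacc := account f hnonneg hinv hsub F₀ hF₀ (q.map Prod.fst)
    (by
      intro A hA2
      rw [List.mem_map] at hA2
      obtain ⟨p, hp, rfl⟩ := hA2
      exact (htile p hp).1)
    (by
      intro A hA2
      rw [List.mem_map] at hA2
      obtain ⟨p, hp, rfl⟩ := hA2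
      exact hq2 p hp)
  -- sum of f over tiles
  have hsum1 : ((q.map Prod.fst).map f).sum ≤ b * (q.map (fun p => ((p.1.card : ℕ) : ℝ))).sum := by
    rw [List.map_map]
    calc (q.map (f ∘ Prod.fst)).sum ≤ (q.map (fun p => b * ((p.1.card : ℕ) : ℝ))).sum := by
          apply List.sum_le_sum
          intro p hp
          exact (htile p hp).2
      _ = b * (q.map (fun p => ((p.1.card : ℕ) : ℝ))).sum := List.sum_map_mul_left _ _ _
  -- total tile size
  have hq3' : (q.map Prod.snd).Pairwise Disjoint := by
    have := hq3
    simpa using this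
  have hsize : (1 - ε) * (q.map (fun p => ((p.1.card : ℕ) : ℝ))).sum ≤ (F₀.card : ℝ) :=
    sum_tiles_le ε F₀ q (fun p hp => ⟨(hq1 p hp).2.1, (hq1 p hp).2.2⟩) hq3' hq2
  have hsumnn : 0 ≤ (q.map (fun p => ((p.1.card : ℕ) : ℝ))).sum :=
    List.sum_nonneg (by
      intro x hx
      rw [List.mem_map] at hx
      obtain ⟨p, _, rfl⟩ := hx
      positivity)
  have h1ε : (0:ℝ) < 1 - ε := by linarith
  have hS : (q.map (fun p => ((p.1.card : ℕ) : ℝ))).sum ≤ (F₀.card : ℝ) / (1 - ε) := by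
    rw [le_div_iff₀ h1ε]
    linarith [hsize]
  have hfinal : ((q.map Prod.fst).map f).sum ≤ b / (1-ε) * F₀.card := by
    calc ((q.map Prod.fst).map f).sum ≤ b * (q.map (fun p => ((p.1.card : ℕ) : ℝ))).sum := hsum1
      _ ≤ b * ((F₀.card : ℝ) / (1 - ε)) := mul_le_mul_of_nonneg_left hS hb0
      _ = b / (1-ε) * F₀.card := by ring
  calc f F₀ ≤ ((q.map Prod.fst).map f).sum + ((F₀ \ unionF (q.map Prod.fst)).card : ℝ) * f {1} := hacc
    _ ≤ b / (1-ε) * F₀.card + (2 * ε * F₀.card) * f {1} := by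
        have := mul_le_mul_of_nonneg_right hrem hf1
        linarith
    _ = (b/(1-ε) + 2*ε*f {1}) * F₀.card := by ring

end OW

/-- Ornstein–Weiss lemma: for a right-invariant subadditive nonnegative function `f` on the
finite nonempty subsets of a countably infinite amenable group, `f(F n)/|F n|` converges
along every Følner sequence, to a common limit independent of the Følner sequence. -/
theorem stmt12 {Γ : Type*} [Group Γ] [Countable Γ] [Infinite Γ] [DecidableEq Γ]
    (f : Finset Γ → ℝ)
    (hnonneg : ∀ F : Finset Γ, F.Nonempty → 0 ≤ f F)
    (hinv : ∀ (F : Finset Γ) (g : Γ), F.Nonempty → f (F.image (fun x => x * g)) = f F)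
    (hsub : ∀ E F : Finset Γ, E.Nonempty → F.Nonempty → f (E ∪ F) ≤ f E + f F)
    (hamenable : ∃ F : ℕ → Finset Γ, IsFolner F) :
    ∃ L : ℝ, ∀ F : ℕ → Finset Γ, IsFolner F →
      Tendsto (fun n => f (F n) / (F n).card) atTop (nhds L) := by
  classical
  have hf1 : 0 ≤ f {1} := hnonneg {1} (by simp)
  set r : (ℕ → Finset Γ) → ℕ → ℝ := fun H n => f (H n) / ((H n).card : ℝ) with hr
  have hub : ∀ (H : ℕ → Finset Γ), IsFolner H → ∀ n, 0 ≤ r H n ∧ r H n ≤ f {1} := by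
    intro H hH n
    have hpos : (0:ℝ) < ((H n).card : ℝ) := by exact_mod_cast Finset.card_pos.2 (hH.1 n)
    constructor
    · exact div_nonneg (hnonneg _ (hH.1 n)) (le_of_lt hpos)
    · rw [hr]
      rw [div_le_iff₀ hpos]
      have := OW.f_le_card f hnonneg hinv hsub (H n) (hH.1 n)
      linarith
  have hBddAbove : ∀ (H : ℕ → Finset Γ), IsFolner H → IsBoundedUnder (· ≤ ·) atTop (r H) :=
    fun H hH => isBoundedUnder_of ⟨f {1}, fun n => (hub H hH n).2⟩
  have hBddBelow : ∀ (H : ℕ → Finset Γ), IsFolner H → IsBoundedUnder (· ≥ ·) atTop (r H) :=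
    fun H hH => isBoundedUnder_of ⟨0, fun n => (hub H hH n).1⟩
  have hCoAbove : ∀ (H : ℕ → Finset Γ), IsFolner H → IsCoboundedUnder (· ≥ ·) atTop (r H) :=
    fun H hH => (hBddAbove H hH).isCoboundedUnder_flip
  have hCoBelow : ∀ (H : ℕ → Finset Γ), IsFolner H → IsCoboundedUnder (· ≤ ·) atTop (r H) :=
    fun H hH => (hBddBelow H hH).isCoboundedUnder_flip
  set S : Set ℝ := {x | ∃ H, IsFolner H ∧ Filter.liminf (r H) atTop = x} with hS
  have hSne : S.Nonempty := by
    obtain ⟨H, hH⟩ := hamenable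
    exact ⟨_, H, hH, rfl⟩
  have hS0 : ∀ x ∈ S, 0 ≤ x := by
    rintro x ⟨H, hH, rfl⟩
    exact le_liminf_of_le (hCoAbove H hH)
      (Filter.Eventually.of_forall (fun n => (hub H hH n).1))
  set L : ℝ := sInf S with hL
  have hbdd : BddBelow S := ⟨0, fun x hx => hS0 x hx⟩
  have hL0 : 0 ≤ L := le_csInf hSne hS0
  have main : ∀ (G : ℕ → Finset Γ), IsFolner G → limsup (r G) atTop ≤ L := by
    intro G hG
    apply le_of_forall_pos_le_add
    intro δ hδ
    obtain ⟨c, hcpos, hcge⟩ : ∃ c : ℝ, 0 < c ∧ 2 + 2*L + 2*f {1} ≤ c :=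
      ⟨2 + 2*L + 2*f {1}, by linarith, le_refl _⟩
    obtain ⟨ε, hε0, hε2, hεc⟩ : ∃ ε : ℝ, 0 < ε ∧ ε ≤ 1/2 ∧ ε * c ≤ δ := by
      refine ⟨min (1/2) (δ / c), lt_min (by norm_num) (div_pos hδ hcpos), min_le_left _ _, ?_⟩
      have h1 : min (1/2) (δ / c) ≤ δ / c := min_le_right _ _
      rw [← le_div_iff₀ hcpos]
      exact h1
    -- a Følner sequence attaining close to the infimum
    have hexists : ∃ x ∈ S, x < L + ε := by
      by_contra hcon
      push_neg at hcon
      have : L + ε ≤ L := le_csInf hSne hcon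
      linarith
    obtain ⟨x, ⟨H, hH, hHx⟩, hxL⟩ := hexists
    have hfreq : ∃ᶠ m in atTop, r H m < L + ε := by
      apply frequently_lt_of_liminf_lt (hCoAbove H hH)
      rw [hHx]
      exact hxL
    obtain ⟨K, hK⟩ := exists_pow_lt_of_lt_one hε0 (show 1 - ε < 1 by linarith)
    obtain ⟨Es, hEs1, hEs2⟩ := OW.shapes f H hH (L + ε) (ε/8) (by linarith) hfreq K
    obtain ⟨N, hNpos, hNge⟩ : ∃ N : ℝ, 0 < N ∧ ∀ s, 1 ≤ s → s ≤ K → ((Es s).card : ℝ) ≤ N := by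
      refine ⟨(((Finset.Icc 1 K).biUnion Es).card : ℝ) + 1,
        by positivity, ?_⟩
      intro s hs1 hsK
      have hsubT : Es s ⊆ (Finset.Icc 1 K).biUnion Es :=
        Finset.subset_biUnion_of_mem Es (Finset.mem_Icc.2 ⟨hs1, hsK⟩)
      have h2 : ((Es s).card:ℝ) ≤ ((((Finset.Icc 1 K).biUnion Es).card):ℝ) := by
        exact_mod_cast Finset.card_le_card hsubT
      linarith
    have hδ' : (0:ℝ) < (ε/8)/N := div_pos (by linarith) hNpos
    have hev := OW.folner_eventually G hG ((Finset.Icc 1 K).biUnion Es) ((ε/8)/N) hδ'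
    have hev2 : ∀ᶠ n in atTop, ∀ s, 1 ≤ s → s ≤ K →
        (((G n) \ OW.Dint (Es s) (G n)).card : ℝ) ≤ (ε/8) * (G n).card := by
      filter_upwards [hev] with n hn
      intro s hs1 hsK
      have hcardpos : (0:ℝ) ≤ ((G n).card : ℝ) := Nat.cast_nonneg _
      have hsubT : Es s ⊆ (Finset.Icc 1 K).biUnion Es :=
        Finset.subset_biUnion_of_mem Es (Finset.mem_Icc.2 ⟨hs1, hsK⟩)
      calc (((G n) \ OW.Dint (Es s) (G n)).card : ℝ)
          ≤ ∑ e ∈ Es s, ((symmDiff (G n) (OW.lmul e (G n))).card : ℝ) := OW.bdry_le _ _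
        _ ≤ ∑ _e ∈ Es s, ((ε/8)/N) * (G n).card :=
            Finset.sum_le_sum (fun e he => hn e (hsubT he))
        _ = ((Es s).card : ℝ) * (((ε/8)/N) * (G n).card) := by
            rw [Finset.sum_const, nsmul_eq_mul]
        _ ≤ N * (((ε/8)/N) * (G n).card) :=
            mul_le_mul_of_nonneg_right (hNge s hs1 hsK)
              (mul_nonneg (le_of_lt hδ') hcardpos)
        _ = (ε/8) * (G n).card := by
            field_simp
    have hev3 : ∀ᶠ n in atTop, r G n ≤ (L+ε)/(1-ε) + 2*ε*f {1} := by
      filter_upwards [hev2] with n hn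
      have hpos : (0:ℝ) < ((G n).card : ℝ) := by exact_mod_cast Finset.card_pos.2 (hG.1 n)
      have hest := OW.upper_est f hnonneg hinv hsub (L+ε) ε (by linarith) hε0 hε2 K Es
        hEs1 hEs2 (le_of_lt hK) (G n) (hG.1 n) hn
      rw [hr]
      rw [div_le_iff₀ hpos]
      exact hest
    have hlimsup := limsup_le_of_le (hCoBelow G hG) hev3
    have hnum : (L+ε)/(1-ε) + 2*ε*f {1} ≤ L + δ := by
      have h1ε : (0:ℝ) < 1 - ε := by linarith
      have h2 : (L+ε)/(1-ε) ≤ (L+ε)*(1+2*ε) := by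
        rw [div_le_iff₀ h1ε]
        nlinarith [mul_nonneg (mul_nonneg (add_nonneg hL0 hε0.le) hε0.le)
          (by linarith : (0:ℝ) ≤ 1 - 2*ε)]
      have h3 : (L+ε)*(1+2*ε) + 2*ε*f {1} ≤ L + ε * c := by
        nlinarith [hL0, hε0, hε2, hf1, hcge]
      linarith
    linarith
  refine ⟨L, ?_⟩
  intro G hG
  have h1 : L ≤ liminf (r G) atTop := csInf_le hbdd ⟨G, hG, rfl⟩
  have h2 : limsup (r G) atTop ≤ L := main G hG
  exact tendsto_of_le_liminf_of_limsup_le h1 h2 (hBddAbove G hG) (hBddBelow G hG)
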